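/- Assume q is odd and let n ≥ 1. For all a, b, h₀, h₁, …, h_n ∈ k^×, Σ_{(t₁,…,t_n)∈(k^×)^n} ψ( Σ_{i=1}^{n−1} (t_i/t_{i+1})·h_i + b·t_n²·h_n + a·h₀·t₁^{−2} ) = Kl_α^{n+1}(ψ; (2,…,2,1,1)) + ω₀(a·h₀)·Kl_α^{n+1}(ψ; (2,…,2,1,1), (𝟙,…,𝟙,ω₀)), where α := a·b·h₁²⋯h_{n−1}²·h_n·h₀, the weight vector (2,…,2,1,1) has n−1 entries equal to 2 followed by two entries equal to 1, and the character vector consists of n trivial characters followed by ω₀. (This finite-field identity is the computation underlying the character values of simple supercuspidal representations of Sp_{2n} at affine generic elements; it equals twice the sum over T_{Sp_{2n}}(q)/{±1} in the paper's Proposition.) -/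

import Mathlib

open scoped BigOperators

/-- The Kloosterman sum `Kl_u^{r}(ψ; (k₁,…,k_r), (χ₁,…,χ_r))` attached to a finite field `k`,
a nontrivial additive character `ψ` of `k`, weights `w` and multiplicative characters `χs`:
the sum of `ψ(x₁+⋯+x_r)·χ₁(x₁)⋯χ_r(x_r)` over all `(x₁,…,x_r) ∈ (k^×)^r`
with `x₁^{k₁}⋯x_r^{k_r} = u`. -/
noncomputable def Kl {k : Type*} [Field k] [Fintype k] [DecidableEq k]
    (ψ : AddChar k ℂ) {r : ℕ} (w : Fin r → ℕ) (χs : Fin r → MulChar k ℂ) (u : kˣ) : ℂ :=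
  ∑ x : Fin r → kˣ,
    if ∏ i, x i ^ w i = u then ψ (∑ i, ((x i : k))) * ∏ i, χs i ((x i : k)) else 0

set_option linter.unusedSectionVars false
set_option maxHeartbeats 1000000

section SSCAux
variable {k : Type*} [Field k] [Fintype k] [DecidableEq k]

private lemma ssc_ringChar_ne_two (hq : Odd (Fintype.card k)) : ringChar k ≠ 2 := by
  intro h
  have h2 := FiniteField.even_card_of_char_two (F := k) h
  have := Nat.odd_iff.mp hq
  omega

private lemma ssc_omega_mul_self (ω₀ : MulChar k ℂ) (hω₂ : ω₀ ^ 2 = 1) {c : k} (hc : c ≠ 0) :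
    ω₀ c * ω₀ c = 1 := by
  have h1 : (ω₀ ^ 2) c = (1 : MulChar k ℂ) c := by rw [hω₂]
  rw [MulChar.one_apply hc.isUnit] at h1
  rw [← h1]; rw [pow_two]; rfl

private lemma ssc_omega_eq_quadChar (hq : Odd (Fintype.card k)) (ω₀ : MulChar k ℂ)
    (hω₂ : ω₀ ^ 2 = 1) (hω₁ : ω₀ ≠ 1) (u : kˣ) :
    ω₀ (u : k) = ((quadraticChar k (u : k) : ℤ) : ℂ) := by
  have hne : ∀ v : kˣ, (v : k) ≠ 0 := fun v => v.ne_zero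
  have hpm : ∀ v : kˣ, ω₀ (v : k) = 1 ∨ ω₀ (v : k) = -1 := fun v =>
    mul_self_eq_one_iff.mp (ssc_omega_mul_self ω₀ hω₂ (hne v))
  have hsq : ∀ c : k, c ≠ 0 → IsSquare c → ω₀ c = 1 := by
    rintro c hc ⟨d, rfl⟩
    have hd : d ≠ 0 := fun hd => hc (by rw [hd, mul_zero])
    rw [map_mul]; exact ssc_omega_mul_self ω₀ hω₂ hd
  obtain ⟨v, hv⟩ := MulChar.ne_one_iff.mp hω₁
  have hv' : ω₀ (v : k) = -1 := (hpm v).resolve_left hv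
  have hvns : ¬ IsSquare (v : k) := fun hs => hv (hsq _ (hne v) hs)
  by_cases hu : IsSquare (u : k)
  · rw [hsq _ (hne u) hu, (quadraticChar_one_iff_isSquare (hne u)).mpr hu]
    norm_num
  · rw [quadraticChar_neg_one_iff_not_isSquare.mpr hu]
    have hqu : quadraticChar k (u : k) = -1 := quadraticChar_neg_one_iff_not_isSquare.mpr hu
    have hqv : quadraticChar k (v : k) = -1 := quadraticChar_neg_one_iff_not_isSquare.mpr hvns
    have hvinv : quadraticChar k ((v⁻¹ : kˣ) : k) = -1 := by
      have h1 : quadraticChar k ((v : k) * ((v⁻¹ : kˣ) : k)) = 1 := by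
        rw [Units.mul_inv]; exact map_one _
      rw [map_mul, hqv] at h1; linarith
    have hprod : quadraticChar k ((u : k) * ((v⁻¹ : kˣ) : k)) = 1 := by
      rw [map_mul, hqu, hvinv]; ring
    have hsq2 : IsSquare ((u : k) * ((v⁻¹ : kˣ) : k)) :=
      (quadraticChar_one_iff_isSquare (mul_ne_zero (hne u) (hne v⁻¹))).mp hprod
    have h3 : ω₀ ((u : k) * ((v⁻¹ : kˣ) : k)) = 1 :=
      hsq _ (mul_ne_zero (hne u) (hne v⁻¹)) hsq2
    have h4 : (u : k) = ((u : k) * ((v⁻¹ : kˣ) : k)) * (v : k) := by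
      field_simp
      simp
    rw [h4, map_mul, h3, hv', one_mul]
    norm_num

private lemma ssc_sqrt_count (hq : Odd (Fintype.card k)) (ω₀ : MulChar k ℂ)
    (hω₂ : ω₀ ^ 2 = 1) (hω₁ : ω₀ ≠ 1) (w : kˣ) :
    (∑ s : kˣ, if s ^ 2 = w then (1 : ℂ) else 0) = 1 + ω₀ (w : k) := by
  have hne : ∀ v : kˣ, (v : k) ≠ 0 := fun v => v.ne_zero
  by_cases hw : IsSquare (w : k)
  · obtain ⟨c, hc⟩ := hw
    have hc0 : c ≠ 0 := fun h => (hne w) (by rw [hc, h, mul_zero])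
    set v : kˣ := Units.mk0 c hc0 with hvdef
    have hvv : (v : k) * (v : k) = (w : k) := hc.symm
    have hω : ω₀ (w : k) = 1 := by
      rw [← hvv, map_mul]; exact ssc_omega_mul_self ω₀ hω₂ (hne v)
    have hvne : v ≠ -v := by
      intro hcon
      have h1 : (v : k) = -(v : k) := by
        have := congrArg (Units.val) hcon; push_cast at this; exact_mod_cast this
      have h2 : (2 : k) * (v : k) = 0 := by linear_combination h1
      rcases mul_eq_zero.mp h2 with h | h
      · exact Ring.two_ne_zero (ssc_ringChar_ne_two hq) h
      · exact hne v h
    have hiff : ∀ s : kˣ, s ^ 2 = w ↔ s = v ∨ s = -v := by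
      intro s
      constructor
      · intro hs
        have hk : (s : k) ^ 2 = (v : k) ^ 2 := by
          have h := congrArg (Units.val) hs
          push_cast at h
          rw [h, ← hvv]; ring
        rcases sq_eq_sq_iff_eq_or_eq_neg.mp hk with h | h
        · left; exact Units.ext h
        · right; apply Units.ext; rw [h]; simp
      · rintro (rfl | rfl)
        · apply Units.ext; push_cast; rw [← hvv]; ring
        · apply Units.ext; push_cast; rw [← hvv]; ring
    calc (∑ s : kˣ, if s ^ 2 = w then (1 : ℂ) else 0)
        = ∑ s : kˣ, ((if s = v then (1:ℂ) else 0) + (if s = -v then (1:ℂ) else 0)) := by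
          refine Finset.sum_congr rfl fun s _ => ?_
          by_cases h1 : s = v
          · subst h1; simp [hiff, hvne]
          · by_cases h2 : s = -v
            · subst h2; simp [hiff, h1]
            · have : ¬ s ^ 2 = w := by rw [hiff]; tauto
              simp [this, h1, h2]
      _ = 1 + 1 := by
          rw [Finset.sum_add_distrib, Finset.sum_ite_eq' Finset.univ v fun _ => (1:ℂ),
            Finset.sum_ite_eq' Finset.univ (-v) fun _ => (1:ℂ)]
          simp
      _ = 1 + ω₀ (w : k) := by rw [hω]
  · have hz : ∀ s : kˣ, ¬ (s ^ 2 = w) := by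
      intro s hs
      exact hw ⟨(s : k), by rw [← congrArg Units.val hs]; push_cast; ring⟩
    rw [Finset.sum_eq_zero fun s _ => by rw [if_neg (hz s)]]
    rw [ssc_omega_eq_quadChar hq ω₀ hω₂ hω₁ w, quadraticChar_neg_one_iff_not_isSquare.mpr hw]
    norm_num

private lemma ssc_omega_div (ω₀ : MulChar k ℂ) (hω₂ : ω₀ ^ 2 = 1) (c d : kˣ) :
    ω₀ ((c / d : kˣ) : k) = ω₀ (c : k) * ω₀ (d : k) := by
  have h1 : ω₀ ((c / d : kˣ) : k) * ω₀ (d : k) = ω₀ (c : k) := by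
    rw [← map_mul]
    congr 1
    push_cast
    field_simp
  have h2 := ssc_omega_mul_self ω₀ hω₂ (d.ne_zero)
  calc ω₀ ((c / d : kˣ) : k) = ω₀ ((c / d : kˣ) : k) * (ω₀ (d:k) * ω₀ (d:k)) := by
        rw [h2, mul_one]
    _ = (ω₀ ((c / d : kˣ) : k) * ω₀ (d:k)) * ω₀ (d:k) := by ring
    _ = ω₀ (c:k) * ω₀ (d:k) := by rw [h1]

def sscPhi (m : ℕ) (a b h0 : kˣ) (h : Fin (m+1) → kˣ) (t : Fin (m+1) → kˣ) :
    Fin (m+2) → kˣ := fun i =>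
  if hi : i.1 < m then
    t ⟨i.1, by omega⟩ / t ⟨i.1 + 1, by omega⟩ * h ⟨i.1, by omega⟩
  else if i.1 = m then b * t ⟨m, by omega⟩ ^ 2 * h ⟨m, by omega⟩
  else a * h0 / t ⟨0, by omega⟩ ^ 2

def sscT (m : ℕ) (h : Fin (m+1) → kˣ) (x : Fin (m+2) → kˣ) (s : kˣ) : Fin (m+1) → kˣ :=
  fun i => s * ∏ j ∈ Finset.univ.filter (fun j : Fin m => j.1 < i.1),
    (h ⟨j.1, Nat.lt_succ_of_lt j.isLt⟩ / x ⟨j.1, Nat.lt_succ_of_lt (Nat.lt_succ_of_lt j.isLt)⟩)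

variable (m : ℕ) (a b h0 : kˣ) (h : Fin (m+1) → kˣ)

lemma sscPhi_lt (t : Fin (m+1) → kˣ) (v : ℕ) (hv : v < m) (p : v < m + 2) :
    sscPhi m a b h0 h t ⟨v, p⟩
      = t ⟨v, Nat.lt_succ_of_lt hv⟩ / t ⟨v + 1, Nat.succ_lt_succ hv⟩
        * h ⟨v, Nat.lt_succ_of_lt hv⟩ := dif_pos hv

lemma sscPhi_m (t : Fin (m+1) → kˣ) (p : m < m + 2) :
    sscPhi m a b h0 h t ⟨m, p⟩
      = b * t ⟨m, Nat.lt_succ_self m⟩ ^ 2 * h ⟨m, Nat.lt_succ_self m⟩ :=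
  (dif_neg (Nat.lt_irrefl m)).trans (if_pos rfl)

lemma sscPhi_last (t : Fin (m+1) → kˣ) (p : m + 1 < m + 2) :
    sscPhi m a b h0 h t ⟨m + 1, p⟩ = a * h0 / t ⟨0, Nat.succ_pos m⟩ ^ 2 :=
  (dif_neg (show ¬ (m+1 < m) by omega)).trans (if_neg (show ¬ (m+1 = m) by omega))

lemma sscT_zero (x : Fin (m+2) → kˣ) (s : kˣ) (p : 0 < m + 1) :
    sscT m h x s ⟨0, p⟩ = s := by
  unfold sscT
  rw [show Finset.univ.filter (fun j : Fin m => j.1 < 0) = ∅ by ext j; simp, Finset.prod_empty,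
    mul_one]

lemma sscT_succ (x : Fin (m+2) → kˣ) (s : kˣ) (v : ℕ) (hv : v < m)
    (p1 : v + 1 < m + 1) (p2 : v < m + 1) (p3 : v < m + 2) :
    sscT m h x s ⟨v+1, p1⟩ = sscT m h x s ⟨v, p2⟩ * (h ⟨v, p2⟩ / x ⟨v, p3⟩) := by
  unfold sscT
  have hins : Finset.univ.filter (fun j : Fin m => j.1 < v+1)
      = insert ⟨v, hv⟩ (Finset.univ.filter (fun j : Fin m => j.1 < v)) := by
    ext j
    simp only [Finset.mem_filter, Finset.mem_univ, true_and, Finset.mem_insert, Fin.ext_iff]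
    omega
  rw [hins, Finset.prod_insert (by simp)]
  ac_rfl

lemma sscT_last (x : Fin (m+2) → kˣ) (s : kˣ) (p : m < m + 1) :
    sscT m h x s ⟨m, p⟩ = s * ∏ j : Fin m,
      (h ⟨j.1, Nat.lt_succ_of_lt j.isLt⟩
        / x ⟨j.1, Nat.lt_succ_of_lt (Nat.lt_succ_of_lt j.isLt)⟩) := by
  unfold sscT
  congr 1
  apply Finset.prod_congr (by ext j; simp [j.isLt]) fun _ _ => rfl

lemma ssc_tele (t : Fin (m+1) → kˣ) :
    (∏ j : Fin m, t ⟨j.1, Nat.lt_succ_of_lt j.isLt⟩ / t ⟨j.1+1, Nat.succ_lt_succ j.isLt⟩)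
      = t ⟨0, Nat.succ_pos m⟩ / t ⟨m, Nat.lt_succ_self m⟩ := by
  set f : ℕ → kˣ := fun v => if hv : v < m+1 then t ⟨v, hv⟩ else 1 with hf
  calc (∏ j : Fin m, t ⟨j.1, Nat.lt_succ_of_lt j.isLt⟩ / t ⟨j.1+1, Nat.succ_lt_succ j.isLt⟩)
      = ∏ j : Fin m, (f (j : ℕ) / f ((j : ℕ) + 1)) := by
        refine Finset.prod_congr rfl fun j _ => ?_
        simp only [hf]
        rw [dif_pos (Nat.lt_succ_of_lt j.isLt), dif_pos (Nat.succ_lt_succ j.isLt)]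
    _ = ∏ v ∈ Finset.range m, f v / f (v+1) :=
        Fin.prod_univ_eq_prod_range (fun v => f v / f (v+1)) m
    _ = f 0 / f m := Finset.prod_range_div' f m
    _ = t ⟨0, Nat.succ_pos m⟩ / t ⟨m, Nat.lt_succ_self m⟩ := by
        simp only [hf]
        rw [dif_pos (Nat.succ_pos m), dif_pos (Nat.lt_succ_self m)]

lemma ssc_prod_split (x : Fin (m+2) → kˣ) :
    (∏ i : Fin (m+2), x i ^ (if (i : ℕ) < m then 2 else 1))
      = (∏ j : Fin m, x ⟨j.1, Nat.lt_succ_of_lt (Nat.lt_succ_of_lt j.isLt)⟩ ^ 2)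
        * x ⟨m, by omega⟩ * x ⟨m+1, by omega⟩ := by
  rw [Fin.prod_univ_castSucc (f := fun i : Fin (m+2) => x i ^ (if (i : ℕ) < m then 2 else 1)),
    Fin.prod_univ_castSucc]
  congr 1
  · congr 1
    · refine Finset.prod_congr rfl fun j _ => ?_
      show x ⟨j.1, Nat.lt_succ_of_lt (Nat.lt_succ_of_lt j.isLt)⟩ ^ (if (j : ℕ) < m then 2 else 1)
        = x ⟨j.1, Nat.lt_succ_of_lt (Nat.lt_succ_of_lt j.isLt)⟩ ^ 2
      rw [if_pos j.isLt]
    · show x ⟨m, by omega⟩ ^ (if m < m then 2 else 1) = x ⟨m, by omega⟩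
      rw [if_neg (by omega), pow_one]
  · show x ⟨m+1, by omega⟩ ^ (if m + 1 < m then 2 else 1) = x ⟨m+1, by omega⟩
    rw [if_neg (by omega), pow_one]

lemma ssc_sum_split (x : Fin (m+2) → kˣ) :
    (∑ i : Fin (m+2), (x i : k))
      = (∑ j : Fin m, (x ⟨j.1, Nat.lt_succ_of_lt (Nat.lt_succ_of_lt j.isLt)⟩ : k))
        + (x ⟨m, by omega⟩ : k) + (x ⟨m+1, by omega⟩ : k) := by
  rw [Fin.sum_univ_castSucc (f := fun i : Fin (m+2) => (x i : k)), Fin.sum_univ_castSucc]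
  rfl

lemma sscPhi_mem (t : Fin (m+1) → kˣ) :
    (∏ i : Fin (m+2), sscPhi m a b h0 h t i ^ (if (i : ℕ) < m then 2 else 1))
      = a * b * (∏ j : Fin m, h ⟨j.1, Nat.lt_succ_of_lt j.isLt⟩ ^ 2)
        * h ⟨m, Nat.lt_succ_self m⟩ * h0 := by
  rw [ssc_prod_split]
  rw [sscPhi_m, sscPhi_last]
  have hprod : (∏ j : Fin m,
        sscPhi m a b h0 h t ⟨j.1, Nat.lt_succ_of_lt (Nat.lt_succ_of_lt j.isLt)⟩ ^ 2)
      = ((t ⟨0, Nat.succ_pos m⟩ / t ⟨m, Nat.lt_succ_self m⟩)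
          * ∏ j : Fin m, h ⟨j.1, Nat.lt_succ_of_lt j.isLt⟩) ^ 2 := by
    rw [Finset.prod_pow]
    rw [show (∏ j : Fin m,
        sscPhi m a b h0 h t ⟨j.1, Nat.lt_succ_of_lt (Nat.lt_succ_of_lt j.isLt)⟩)
      = ∏ j : Fin m, (t ⟨j.1, Nat.lt_succ_of_lt j.isLt⟩ / t ⟨j.1+1, Nat.succ_lt_succ j.isLt⟩
          * h ⟨j.1, Nat.lt_succ_of_lt j.isLt⟩)
      from Finset.prod_congr rfl fun j _ => sscPhi_lt m a b h0 h t j.1 j.isLt _]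
    rw [Finset.prod_mul_distrib, ssc_tele]
  rw [hprod]
  rw [show (∏ j : Fin m, h ⟨j.1, Nat.lt_succ_of_lt j.isLt⟩ ^ 2)
    = (∏ j : Fin m, h ⟨j.1, Nat.lt_succ_of_lt j.isLt⟩) ^ 2 from Finset.prod_pow _ _ _]
  set A := t ⟨0, Nat.succ_pos m⟩
  set B := t ⟨m, Nat.lt_succ_self m⟩
  set P := ∏ j : Fin m, h ⟨j.1, Nat.lt_succ_of_lt j.isLt⟩
  set H := h ⟨m, Nat.lt_succ_self m⟩
  rw [Units.ext_iff]
  push_cast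
  field_simp

lemma sscT_Phi (t : Fin (m+1) → kˣ) (s : kˣ) (hs : s = t ⟨0, Nat.succ_pos m⟩) :
    sscT m h (sscPhi m a b h0 h t) s = t := by
  subst hs
  suffices H : ∀ v (hv : v < m + 1),
      sscT m h (sscPhi m a b h0 h t) (t ⟨0, Nat.succ_pos m⟩) ⟨v, hv⟩ = t ⟨v, hv⟩ by
    funext i; exact H i.1 i.2
  intro v
  induction v with
  | zero => intro hv; exact sscT_zero m h _ _ _
  | succ v ih =>
    intro hv
    have hvm : v < m := by omega
    rw [sscT_succ m h _ _ v hvm hv (by omega) (by omega), ih (by omega),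
      sscPhi_lt m a b h0 h t v hvm (by omega)]
    set A := t ⟨v, by omega⟩
    set C := t ⟨v + 1, hv⟩
    set H := h ⟨v, by omega⟩
    rw [Units.ext_iff]
    push_cast
    field_simp

lemma sscPhi_T (x : Fin (m+2) → kˣ) (s : kˣ)
    (hc : (∏ i : Fin (m+2), x i ^ (if (i : ℕ) < m then 2 else 1))
      = a * b * (∏ j : Fin m, h ⟨j.1, Nat.lt_succ_of_lt j.isLt⟩ ^ 2)
        * h ⟨m, Nat.lt_succ_self m⟩ * h0)
    (hs : s ^ 2 = a * h0 / x ⟨m+1, by omega⟩) :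
    sscPhi m a b h0 h (sscT m h x s) = x := by
  funext i
  obtain ⟨v, hv⟩ := i
  by_cases h1 : v < m
  · rw [sscPhi_lt m a b h0 h _ v h1 hv,
      sscT_succ m h x s v h1 (Nat.succ_lt_succ h1) (Nat.lt_succ_of_lt h1) (by omega)]
    set A := sscT m h x s ⟨v, Nat.lt_succ_of_lt h1⟩
    set H := h ⟨v, Nat.lt_succ_of_lt h1⟩
    set X := x ⟨v, by omega⟩
    rw [Units.ext_iff]
    push_cast
    field_simp
  · by_cases h2 : v = m
    · subst v
      rw [sscPhi_m, sscT_last]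
      rw [ssc_prod_split] at hc
      rw [Finset.prod_pow, Finset.prod_pow] at hc
      rw [Finset.prod_div_distrib]
      have hck := congrArg Units.val hc
      have hsk := congrArg Units.val hs
      push_cast at hck hsk
      rw [Units.ext_iff]
      push_cast
      have hL : ((x ⟨m+1, by omega⟩ : kˣ) : k) ≠ 0 := Units.ne_zero _
      have hQ : (∏ i : Fin m,
          ((x ⟨i.1, Nat.lt_succ_of_lt (Nat.lt_succ_of_lt i.isLt)⟩ : kˣ) : k)) ≠ 0 :=
        Finset.prod_ne_zero_iff.mpr fun j _ => Units.ne_zero _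
      rw [mul_pow, hsk, div_pow]
      field_simp
      linear_combination hck.symm
    · have h3 : v = m + 1 := by omega
      subst h3
      rw [sscPhi_last, sscT_zero]
      have hsk := congrArg Units.val hs
      push_cast at hsk
      rw [Units.ext_iff]
      push_cast
      rw [hsk]
      have hL : ((x ⟨m+1, by omega⟩ : kˣ) : k) ≠ 0 := Units.ne_zero _
      have ha : ((a : kˣ) : k) ≠ 0 := Units.ne_zero _
      have hh0 : ((h0 : kˣ) : k) ≠ 0 := Units.ne_zero _
      field_simp

end SSCAux

theorem char_simple_supercuspidal_Sp {k : Type*} [Field k] [Fintype k] [DecidableEq k]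
    (hq : Odd (Fintype.card k))
    (ψ : AddChar k ℂ) (hψ : ∃ x : k, ψ x ≠ 1)
    (ω₀ : MulChar k ℂ) (hω₂ : ω₀ ^ 2 = 1) (hω₁ : ω₀ ≠ 1)
    (n : ℕ) (hn : 1 ≤ n)
    (a b h0 : kˣ) (h : Fin n → kˣ) :
    ∑ t : Fin n → kˣ,
      ψ ((∑ i : Fin (n - 1),
            ((t ⟨i.1, by have := i.isLt; omega⟩ : k) / (t ⟨i.1 + 1, by have := i.isLt; omega⟩ : k))
              * (h ⟨i.1, by have := i.isLt; omega⟩ : k))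
          + (b : k) * (t ⟨n - 1, by omega⟩ : k) ^ 2 * (h ⟨n - 1, by omega⟩ : k)
          + (a : k) * (h0 : k) / (t ⟨0, by omega⟩ : k) ^ 2)
    = Kl ψ (fun i : Fin (n + 1) => if (i : ℕ) < n - 1 then 2 else 1)
        (fun _ => 1)
        (a * b * (∏ i : Fin (n - 1), h ⟨i.1, by have := i.isLt; omega⟩ ^ 2)
          * h ⟨n - 1, by omega⟩ * h0)
      + ω₀ ((a : k) * (h0 : k)) *
        Kl ψ (fun i : Fin (n + 1) => if (i : ℕ) < n - 1 then 2 else 1)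
          (fun i : Fin (n + 1) => if (i : ℕ) < n then 1 else ω₀)
          (a * b * (∏ i : Fin (n - 1), h ⟨i.1, by have := i.isLt; omega⟩ ^ 2)
            * h ⟨n - 1, by omega⟩ * h0) := by
  obtain ⟨m, rfl⟩ : ∃ m, n = m + 1 := ⟨n - 1, by omega⟩
  show (∑ t : Fin (m+1) → kˣ,
      ψ ((∑ i : Fin m,
            ((t ⟨i.1, Nat.lt_succ_of_lt i.isLt⟩ : k) / (t ⟨i.1 + 1, Nat.succ_lt_succ i.isLt⟩ : k))
              * (h ⟨i.1, Nat.lt_succ_of_lt i.isLt⟩ : k))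
          + (b : k) * (t ⟨m, Nat.lt_succ_self m⟩ : k) ^ 2 * (h ⟨m, Nat.lt_succ_self m⟩ : k)
          + (a : k) * (h0 : k) / (t ⟨0, Nat.succ_pos m⟩ : k) ^ 2))
    = Kl ψ (fun i : Fin (m + 2) => if (i : ℕ) < m then 2 else 1)
        (fun _ => 1)
        (a * b * (∏ i : Fin m, h ⟨i.1, Nat.lt_succ_of_lt i.isLt⟩ ^ 2)
          * h ⟨m, Nat.lt_succ_self m⟩ * h0)
      + ω₀ ((a : k) * (h0 : k)) *
        Kl ψ (fun i : Fin (m + 2) => if (i : ℕ) < m then 2 else 1)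
          (fun i : Fin (m + 2) => if (i : ℕ) < m + 1 then 1 else ω₀)
          (a * b * (∏ i : Fin m, h ⟨i.1, Nat.lt_succ_of_lt i.isLt⟩ ^ 2)
            * h ⟨m, Nat.lt_succ_self m⟩ * h0)
  set α : kˣ := a * b * (∏ i : Fin m, h ⟨i.1, Nat.lt_succ_of_lt i.isLt⟩ ^ 2)
      * h ⟨m, Nat.lt_succ_self m⟩ * h0 with hα
  have hRHS : Kl ψ (fun i : Fin (m + 2) => if (i : ℕ) < m then 2 else 1) (fun _ => 1) α
      + ω₀ ((a : k) * (h0 : k)) *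
        Kl ψ (fun i : Fin (m + 2) => if (i : ℕ) < m then 2 else 1)
          (fun i : Fin (m + 2) => if (i : ℕ) < m + 1 then 1 else ω₀) α
      = ∑ x : Fin (m+2) → kˣ, ∑ s : kˣ,
          if (∏ i : Fin (m+2), x i ^ (if (i : ℕ) < m then 2 else 1)) = α
              ∧ s ^ 2 = a * h0 / x ⟨m+1, by omega⟩
          then ψ (∑ i : Fin (m+2), (x i : k)) else 0 := by
    simp only [Kl]
    rw [Finset.mul_sum, ← Finset.sum_add_distrib]
    refine Finset.sum_congr rfl fun x _ => ?_
    by_cases hx : (∏ i : Fin (m+2), x i ^ (if (i : ℕ) < m then 2 else 1)) = α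
    · rw [if_pos hx, if_pos hx]
      have hch1 : (∏ i : Fin (m+2), (1 : MulChar k ℂ) ((x i : k))) = 1 := by
        rw [Finset.prod_congr rfl fun i _ => MulChar.one_apply_coe (x i), Finset.prod_const_one]
      have hch2 : (∏ i : Fin (m+2),
          (if ((i : Fin (m+2)) : ℕ) < m + 1 then (1 : MulChar k ℂ) else ω₀) ((x i : k)))
          = ω₀ ((x ⟨m+1, by omega⟩ : kˣ) : k) := by
        rw [Fin.prod_univ_castSucc (f := fun i : Fin (m+2) =>
          (if ((i : Fin (m+2)) : ℕ) < m + 1 then (1 : MulChar k ℂ) else ω₀) ((x i : k)))]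
        have e1 : ∀ i : Fin (m+1),
            (if ((i.castSucc : Fin (m+2)) : ℕ) < m + 1 then (1 : MulChar k ℂ) else ω₀)
              ((x i.castSucc : k)) = 1 := by
          intro i
          rw [if_pos (show ((i.castSucc : Fin (m+2)) : ℕ) < m + 1 from i.isLt)]
          exact MulChar.one_apply_coe _
        rw [Finset.prod_congr rfl fun i _ => e1 i, Finset.prod_const_one, one_mul]
        show (if (m + 1 < m + 1) then (1 : MulChar k ℂ) else ω₀) _ = _
        rw [if_neg (by omega)]
        rfl
      rw [hch1, hch2, mul_one]
      have hstep : (∑ s : kˣ,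
          if (∏ i : Fin (m+2), x i ^ (if (i : ℕ) < m then 2 else 1)) = α
              ∧ s ^ 2 = a * h0 / x ⟨m+1, by omega⟩
          then ψ (∑ i : Fin (m+2), (x i : k)) else 0)
          = ψ (∑ i : Fin (m+2), (x i : k))
            * ∑ s : kˣ, (if s ^ 2 = a * h0 / x ⟨m+1, by omega⟩ then (1:ℂ) else 0) := by
        rw [Finset.mul_sum]
        refine Finset.sum_congr rfl fun s _ => ?_
        by_cases hs : s ^ 2 = a * h0 / x ⟨m+1, by omega⟩
        · rw [if_pos ⟨hx, hs⟩, if_pos hs, mul_one]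
        · rw [if_neg (fun hcon => hs hcon.2), if_neg hs, mul_zero]
      rw [hstep, ssc_sqrt_count hq ω₀ hω₂ hω₁]
      have hsplit : ω₀ ((a * h0 / x ⟨m+1, by omega⟩ : kˣ) : k)
          = ω₀ ((a:k) * (h0:k)) * ω₀ ((x ⟨m+1, by omega⟩ : kˣ) : k) := by
        rw [ssc_omega_div ω₀ hω₂ (a*h0) (x ⟨m+1, by omega⟩)]
        norm_cast
      rw [hsplit]
      ring
    · rw [if_neg hx, if_neg hx]
      rw [Finset.sum_eq_zero fun s _ => if_neg (fun hcon => hx hcon.1)]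
      ring
  have hLHSarg : ∀ t : Fin (m+1) → kˣ,
      ((∑ i : Fin m, ((t ⟨i.1, Nat.lt_succ_of_lt i.isLt⟩ : k)
            / (t ⟨i.1 + 1, Nat.succ_lt_succ i.isLt⟩ : k)) * (h ⟨i.1, Nat.lt_succ_of_lt i.isLt⟩ : k))
        + (b : k) * (t ⟨m, Nat.lt_succ_self m⟩ : k) ^ 2 * (h ⟨m, Nat.lt_succ_self m⟩ : k)
        + (a : k) * (h0 : k) / (t ⟨0, Nat.succ_pos m⟩ : k) ^ 2)
      = ∑ i : Fin (m+2), ((sscPhi m a b h0 h t i : kˣ) : k) := by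
    intro t
    rw [ssc_sum_split]
    congr 1
    · congr 1
      · refine Finset.sum_congr rfl fun j _ => ?_
        rw [sscPhi_lt m a b h0 h t j.1 j.isLt]
        push_cast
        ring
      · rw [sscPhi_m]
        push_cast
        ring
    · rw [sscPhi_last]
      push_cast
      ring
  rw [hRHS]
  calc (∑ t : Fin (m+1) → kˣ,
      ψ ((∑ i : Fin m,
            ((t ⟨i.1, Nat.lt_succ_of_lt i.isLt⟩ : k) / (t ⟨i.1 + 1, Nat.succ_lt_succ i.isLt⟩ : k))
              * (h ⟨i.1, Nat.lt_succ_of_lt i.isLt⟩ : k))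
          + (b : k) * (t ⟨m, Nat.lt_succ_self m⟩ : k) ^ 2 * (h ⟨m, Nat.lt_succ_self m⟩ : k)
          + (a : k) * (h0 : k) / (t ⟨0, Nat.succ_pos m⟩ : k) ^ 2))
      = ∑ t : Fin (m+1) → kˣ, ψ (∑ i : Fin (m+2), ((sscPhi m a b h0 h t i : kˣ) : k)) :=
        Finset.sum_congr rfl fun t _ => by rw [hLHSarg t]
    _ = ∑ p ∈ Finset.univ.filter (fun p : (Fin (m+2) → kˣ) × kˣ =>
          (∏ i : Fin (m+2), p.1 i ^ (if (i : ℕ) < m then 2 else 1)) = α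
            ∧ p.2 ^ 2 = a * h0 / p.1 ⟨m+1, by omega⟩),
          ψ (∑ i : Fin (m+2), (p.1 i : k)) := by
        refine Finset.sum_bij' (fun t _ => (sscPhi m a b h0 h t, t ⟨0, Nat.succ_pos m⟩))
          (fun p _ => sscT m h p.1 p.2) ?_ ?_ ?_ ?_ ?_
        · intro t _
          refine Finset.mem_filter.mpr ⟨Finset.mem_univ _, sscPhi_mem m a b h0 h t, ?_⟩
          show (t ⟨0, Nat.succ_pos m⟩) ^ 2 = a * h0 / sscPhi m a b h0 h t ⟨m+1, by omega⟩
          rw [sscPhi_last]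
          rw [Units.ext_iff]; push_cast
          have h1 : ((t ⟨0, Nat.succ_pos m⟩ : kˣ) : k) ≠ 0 := Units.ne_zero _
          have ha : ((a : kˣ) : k) ≠ 0 := Units.ne_zero _
          have hh0 : ((h0 : kˣ) : k) ≠ 0 := Units.ne_zero _
          field_simp
        · intro p _; exact Finset.mem_univ _
        · intro t _; exact sscT_Phi m a b h0 h t _ rfl
        · intro p hp
          obtain ⟨-, hc, hs⟩ := Finset.mem_filter.mp hp
          refine Prod.ext ?_ ?_
          · exact sscPhi_T m a b h0 h p.1 p.2 hc hs
          · exact sscT_zero m h p.1 p.2 _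
        · intro t _; rfl
    _ = ∑ x : Fin (m+2) → kˣ, ∑ s : kˣ,
          (if (∏ i : Fin (m+2), x i ^ (if (i : ℕ) < m then 2 else 1)) = α
              ∧ s ^ 2 = a * h0 / x ⟨m+1, by omega⟩
          then ψ (∑ i : Fin (m+2), (x i : k)) else 0) := by
        rw [Finset.sum_filter, Fintype.sum_prod_type]
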